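/- Let q : [0,1] → ℝ be nonnegative, differentiable and single-barrier with transition point x₀ ∈ [0,1], with |q'(x)| ≤ (2/15)·min{q(0), q(1)} for all x ∈ [0,1]. Let 1 ≤ m < n be integers and let z_m, z_n > 0 satisfy φ_q(1, z_m) = mπ, φ_q(1, z_n) = nπ, z_n > z_m and z_m² ≥ 11·q(x₀). If equality z_n²/z_m² = n²/m² holds, then q ≡ 0 on [0,1]. -/

import Mathlib

open Real Set

set_option maxHeartbeats 3000000 in
lemma theta_deriv_aux (q q' φ : ℝ → ℝ) (z x : ℝ) (hz : 0 < z)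
    (hq : HasDerivAt q (q' x) x)
    (hφ : HasDerivAt φ (z - q x / z * Real.sin (φ x) ^ 2) x)
    (hqlt : q x < z ^ 2) :
    HasDerivAt (fun y => φ y - Real.arctan ((1 - Real.sqrt (z ^ 2 - q y) / z) *
        (Real.sin (φ y) * Real.cos (φ y)) /
        (Real.cos (φ y) ^ 2 + Real.sqrt (z ^ 2 - q y) / z * Real.sin (φ y) ^ 2)))
      (Real.sqrt (z ^ 2 - q x) - q' x * (z * Real.sin (φ x) * Real.cos (φ x) /
        (2 * Real.sqrt (z ^ 2 - q x) * (z ^ 2 * Real.cos (φ x) ^ 2 + (z ^ 2 - q x) * Real.sin (φ x) ^ 2)))) x := by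
  set w := q' x with hw
  set s := Real.sin (φ x) with hs
  set c := Real.cos (φ x) with hc
  set r := Real.sqrt (z ^ 2 - q x) with hr
  have hrne : (z:ℝ)^2 - q x ≠ 0 := by nlinarith
  have hrpos : 0 < r := Real.sqrt_pos.2 (by nlinarith)
  have hr2 : r ^ 2 = z ^ 2 - q x := Real.sq_sqrt (by nlinarith)
  have hzne : z ≠ 0 := ne_of_gt hz
  have hsc : s ^ 2 + c ^ 2 = 1 := Real.sin_sq_add_cos_sq (φ x)
  have hDpos : 0 < c ^ 2 + r / z * s ^ 2 := by
    rcases eq_or_ne s 0 with h | h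
    · have : c ^ 2 = 1 := by rw [h] at hsc; linarith [hsc]
      rw [h]; nlinarith
    · have : 0 < s ^ 2 := by positivity
      have : 0 < r / z := by positivity
      nlinarith [sq_nonneg c]
  have hDne : c ^ 2 + r / z * s ^ 2 ≠ 0 := ne_of_gt hDpos
  -- building blocks
  have hsub : HasDerivAt (fun y => z ^ 2 - q y) (-(q' x)) x := by
    exact hq.const_sub (z ^ 2)
  have hsqrt : HasDerivAt (fun y => Real.sqrt (z ^ 2 - q y)) (1 / (2 * r) * -(q' x)) x :=
    (Real.hasDerivAt_sqrt hrne).comp x hsub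
  have hp : HasDerivAt (fun y => Real.sqrt (z ^ 2 - q y) / z) (1 / (2 * r) * -(q' x) / z) x :=
    hsqrt.div_const z
  have hsin : HasDerivAt (fun y => Real.sin (φ y)) (c * (z - q x / z * s ^ 2)) x :=
    (Real.hasDerivAt_sin (φ x)).comp x hφ
  have hcos : HasDerivAt (fun y => Real.cos (φ y)) (-s * (z - q x / z * s ^ 2)) x :=
    (Real.hasDerivAt_cos (φ x)).comp x hφ
  have hN : HasDerivAt (fun y => (1 - Real.sqrt (z ^ 2 - q y) / z) * (Real.sin (φ y) * Real.cos (φ y)))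
      ((0 - 1 / (2 * r) * -(q' x) / z) * (s * c) +
        (1 - r / z) * (c * (z - q x / z * s ^ 2) * c + s * (-s * (z - q x / z * s ^ 2)))) x :=
    (((hasDerivAt_const x (1:ℝ)).sub hp).mul (hsin.mul hcos))
  have hD : HasDerivAt (fun y => Real.cos (φ y) ^ 2 + Real.sqrt (z ^ 2 - q y) / z * Real.sin (φ y) ^ 2)
      ((↑2 * c ^ 1 * (-s * (z - q x / z * s ^ 2))) +
        (1 / (2 * r) * -(q' x) / z * s ^ 2 + r / z * (↑2 * s ^ 1 * (c * (z - q x / z * s ^ 2))))) x :=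
    (hcos.pow 2).add (hp.mul (hsin.pow 2))
  have hquot := hN.div hD hDne
  have harct := hquot.arctan
  have := hφ.sub harct
  convert this using 1
  · rfl
  · rfl
  · rfl
  simp only [Pi.div_apply]
  have hq_eq : q x = z ^ 2 - r ^ 2 := by linarith [hr2]
  rw [hq_eq]
  rw [show z ^ 2 - (z ^ 2 - r ^ 2) = r ^ 2 by ring]
  rw [Real.sqrt_sq hrpos.le]
  simp only [← hs, ← hc, ← hw]
  have hrne0 : r ≠ 0 := ne_of_gt hrpos
  have hWpos : 0 < z ^ 2 * c ^ 2 + r ^ 2 * s ^ 2 := by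
    rcases eq_or_ne s 0 with h | h
    · have hc2 : c ^ 2 = 1 := by rw [h] at hsc; simpa using hsc
      rw [h, hc2]; nlinarith
    · have hs2 : 0 < s ^ 2 := by positivity
      nlinarith [sq_nonneg (z * c), pow_pos hrpos 2]
  have hWne : z ^ 2 * c ^ 2 + r ^ 2 * s ^ 2 ≠ 0 := ne_of_gt hWpos
  have hBne : c ^ 2 * z + r * s ^ 2 ≠ 0 := by
    have : c ^ 2 * z + r * s ^ 2 = z * (c ^ 2 + r / z * s ^ 2) := by field_simp
    rw [this]; exact mul_ne_zero hzne hDne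
  have hstep : (c ^ 2 * z + r * s ^ 2) ^ 2 + ((z - r) * (s * c)) ^ 2
      = z ^ 2 * c ^ 2 + r ^ 2 * s ^ 2 := by
    linear_combination (z ^ 2 * c ^ 2 + r ^ 2 * s ^ 2) * hsc
  have hu2 : 1 + ((1 - r / z) * (s * c) / (c ^ 2 + r / z * s ^ 2)) ^ 2
      = (z ^ 2 * c ^ 2 + r ^ 2 * s ^ 2) / (z ^ 2 * (c ^ 2 + r / z * s ^ 2) ^ 2) := by
    rw [div_pow, one_add_div (pow_ne_zero 2 hDne), div_eq_div_iff (pow_ne_zero 2 hDne) (by positivity)]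
    field_simp
    linear_combination hstep
  rw [hu2, one_div, inv_div]
  have hBne' : z * c ^ 2 + r * s ^ 2 ≠ 0 := by
    rw [show z * c ^ 2 + r * s ^ 2 = c ^ 2 * z + r * s ^ 2 by ring]; exact hBne
  field_simp
  linear_combination ((2)*r^5*s^4 + (-2)*z*r^4*s^2 + (-2)*z*r^4*s^2*c^2 + (-2)*z*r^4*s^4 + (1)*z^2*s*c*w + (2)*z^2*r^3*s^2 + (2)*z^2*r^3*s^2*c^2 + (-2)*z^2*r^3*s^4 + (-2)*z^3*r^2*c^2 + (2)*z^3*r^2*s^2*c^2 + (2)*z^3*r^2*s^4 + (2)*z^4*r*c^2 + (-2)*z^4*r*s^2*c^2) * hsc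


lemma ratio_final_numeric (M N Z : ℝ) (hM : 1 ≤ M) (hMN : M + 1 ≤ N) (hZ : 3 * M ≤ Z)
    (h : 300 * (N ^ 2 - M ^ 2) * Z ≤ 44 * N ^ 2) : False := by
  have hA : N - 1 ≤ M * (N - M) := by
    nlinarith [mul_nonneg (by linarith : (0:ℝ) ≤ M - 1) (by linarith : (0:ℝ) ≤ N - M - 1)]
  have hB : (N - 1) * (N + 1) ≤ (M * (N - M)) * (N + M) :=
    mul_le_mul hA (by linarith) (by linarith) (by nlinarith)
  have hup : 0 ≤ N ^ 2 - M ^ 2 := by nlinarith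
  have h2 : 300 * (N ^ 2 - M ^ 2) * (3 * M) ≤ 300 * (N ^ 2 - M ^ 2) * Z :=
    mul_le_mul_of_nonneg_left hZ (by linarith)
  nlinarith [hB, h2, h]


lemma sqrt_point_compare (zm zn Q c₀ M N : ℝ) (hzm : 0 < zm) (hzn : 0 < zn)
    (hM0 : 0 < M) (hN : 0 < N) (hMN : M < N)
    (hQC : c₀ ≤ Q) (hc0 : 0 < c₀) (hQnn : 0 ≤ Q)
    (hQz : Q < zm ^ 2) (hQzn : Q < zn ^ 2)
    (hratio : zn * M = zm * N) :
    N * Real.sqrt (zm ^ 2 - Q) - M * Real.sqrt (zn ^ 2 - Q)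
      ≤ -((N ^ 2 - M ^ 2) * c₀ / (2 * N * zm)) := by
  set u := N * Real.sqrt (zm ^ 2 - Q) with hudef
  set v := M * Real.sqrt (zn ^ 2 - Q) with hvdef
  have hun : 0 ≤ u := by positivity
  have hvn : 0 ≤ v := by positivity
  have hu2 : u ^ 2 = N ^ 2 * zm ^ 2 - N ^ 2 * Q := by
    rw [hudef, mul_pow, Real.sq_sqrt (by linarith)]
    ring
  have hv2 : v ^ 2 = N ^ 2 * zm ^ 2 - M ^ 2 * Q := by
    rw [hvdef, mul_pow, Real.sq_sqrt (by linarith)]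
    linear_combination (zn * M + zm * N) * hratio
  have huA : u ≤ N * zm := by
    rw [hudef]
    have hs1 : Real.sqrt (zm ^ 2 - Q) ≤ zm := by
      calc Real.sqrt (zm ^ 2 - Q) ≤ Real.sqrt (zm ^ 2) := Real.sqrt_le_sqrt (by linarith)
        _ = zm := Real.sqrt_sq hzm.le
    nlinarith
  have hvA : v ≤ N * zm := by
    rw [hvdef]
    have hs2 : Real.sqrt (zn ^ 2 - Q) ≤ zn := by
      calc Real.sqrt (zn ^ 2 - Q) ≤ Real.sqrt (zn ^ 2) := Real.sqrt_le_sqrt (by linarith)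
        _ = zn := Real.sqrt_sq hzn.le
    calc M * Real.sqrt (zn ^ 2 - Q) ≤ M * zn := by nlinarith
      _ = zn * M := by ring
      _ = zm * N := hratio
      _ = N * zm := by ring
  have hn2m2 : (0:ℝ) < N ^ 2 - M ^ 2 := by nlinarith
  have h1 : (v - u) * (v + u) = (N ^ 2 - M ^ 2) * Q := by
    linear_combination hv2 - hu2
  have hvu : u ≤ v := by nlinarith [mul_pos hn2m2 (lt_of_lt_of_le hc0 hQC)]
  have h2 : (N ^ 2 - M ^ 2) * c₀ ≤ (N ^ 2 - M ^ 2) * Q :=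
    mul_le_mul_of_nonneg_left hQC hn2m2.le
  have h3 : (v - u) * (v + u) ≤ (v - u) * (2 * N * zm) :=
    mul_le_mul_of_nonneg_left (by linarith) (by linarith)
  have h5 : (N ^ 2 - M ^ 2) * c₀ / (2 * N * zm) ≤ v - u := by
    rw [div_le_iff₀ (by positivity)]
    linarith
  linarith

set_option maxHeartbeats 4000000 in
/-- Equality λₙ/λₘ = n²/m² forces q ≡ 0 on [0,1]. -/
theorem ratio_equality_implies_zero_potential
    (q q' : ℝ → ℝ) (x₀ : ℝ) (hx₀ : x₀ ∈ Icc (0:ℝ) 1)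
    (hqnonneg : ∀ x ∈ Icc (0:ℝ) 1, 0 ≤ q x)
    (hqdiff : ∀ x ∈ Icc (0:ℝ) 1, HasDerivAt q (q' x) x)
    (hmono : MonotoneOn q (Icc 0 x₀))
    (hanti : AntitoneOn q (Icc x₀ 1))
    (hq'bound : ∀ x ∈ Icc (0:ℝ) 1, |q' x| ≤ (2/15) * min (q 0) (q 1))
    (m n : ℕ) (hm : 1 ≤ m) (hmn : m < n)
    (zm zn : ℝ) (hzm : 0 < zm) (hzn : 0 < zn)
    (φm φn : ℝ → ℝ)
    (hφm0 : φm 0 = 0)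
    (hφmODE : ∀ x ∈ Icc (0:ℝ) 1,
      HasDerivAt φm (zm - q x / zm * Real.sin (φm x) ^ 2) x)
    (hφm1 : φm 1 = m * π)
    (hφn0 : φn 0 = 0)
    (hφnODE : ∀ x ∈ Icc (0:ℝ) 1,
      HasDerivAt φn (zn - q x / zn * Real.sin (φn x) ^ 2) x)
    (hφn1 : φn 1 = n * π)
    (hgt : zm < zn) (hlam : 11 * q x₀ ≤ zm ^ 2)
    (heq : zn ^ 2 / zm ^ 2 = (n : ℝ) ^ 2 / (m : ℝ) ^ 2) :
    ∀ x ∈ Icc (0:ℝ) 1, q x = 0 := by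
  have h0mem : (0:ℝ) ∈ Icc (0:ℝ) 1 := by constructor <;> norm_num
  have h1mem : (1:ℝ) ∈ Icc (0:ℝ) 1 := by constructor <;> norm_num
  by_cases hc0 : min (q 0) (q 1) ≤ 0
  · -- easy case : q' ≡ 0, q constant, constant = 0
    have hq'0 : ∀ x ∈ Icc (0:ℝ) 1, q' x = 0 := by
      intro x hx
      have h1 := hq'bound x hx
      have h2 : (2/15 : ℝ) * min (q 0) (q 1) ≤ 0 := by nlinarith
      have h3 := abs_nonneg (q' x)
      have h4 : |q' x| = 0 := le_antisymm (le_trans h1 h2) h3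
      exact abs_eq_zero.1 h4
    have hconst : ∀ x ∈ Icc (0:ℝ) 1, q x = q 0 := by
      intro x hx
      have h5 := Convex.norm_image_sub_le_of_norm_hasDerivWithin_le
        (f := q) (f' := q') (s := Icc (0:ℝ) 1) (C := 0)
        (fun y hy => (hqdiff y hy).hasDerivWithinAt)
        (fun y hy => by rw [hq'0 y hy]; simp) (convex_Icc 0 1) h0mem hx
      simp only [zero_mul] at h5
      have h6 : ‖q x - q 0‖ = 0 := le_antisymm h5 (norm_nonneg _)
      have h7 := norm_eq_zero.1 h6
      linarith [sub_eq_zero.1 h7]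
    have hq1 : q 1 = q 0 := hconst 1 h1mem
    have hq00 : q 0 = 0 := by
      have hmin : min (q 0) (q 1) = q 0 := by rw [hq1, min_self]
      have := hqnonneg 0 h0mem
      rw [hmin] at hc0
      linarith
    intro x hx
    rw [hconst x hx, hq00]
  · exfalso
    push_neg at hc0
    set c₀ := min (q 0) (q 1) with hc₀def
    have hupper : ∀ x ∈ Icc (0:ℝ) 1, q x ≤ q x₀ := by
      intro x hx
      rcases le_total x x₀ with h | h
      · exact hmono ⟨hx.1, h⟩ ⟨hx₀.1, le_refl _⟩ h
      · exact hanti ⟨le_refl _, hx₀.2⟩ ⟨h, hx.2⟩ h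
    have hlower : ∀ x ∈ Icc (0:ℝ) 1, c₀ ≤ q x := by
      intro x hx
      rcases le_total x x₀ with h | h
      · exact le_trans (min_le_left _ _) (hmono ⟨le_refl _, hx₀.1⟩ ⟨hx.1, h⟩ hx.1)
      · exact le_trans (min_le_right _ _) (hanti ⟨h, hx.2⟩ ⟨hx₀.2, le_refl _⟩ hx.2)
    have hMpos : 0 < q x₀ := lt_of_lt_of_le hc0 (hlower x₀ hx₀)
    have hzn2 : zm ^ 2 ≤ zn ^ 2 := by nlinarith
    -- clamped potential
    set proj : ℝ → ℝ := fun t => max 0 (min 1 t) with hprojdef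
    have hprojmem : ∀ t, proj t ∈ Icc (0:ℝ) 1 := by
      intro t
      exact ⟨le_max_left _ _, max_le zero_le_one (min_le_left _ _)⟩
    set qc : ℝ → ℝ := fun t => q (proj t) with hqcdef
    have hprojcont : Continuous proj :=
      continuous_const.max (continuous_const.min continuous_id)
    have hqccont : Continuous qc := by
      rw [continuous_iff_continuousAt]
      intro t
      exact ((hqdiff (proj t) (hprojmem t)).continuousAt).comp hprojcont.continuousAt
    have hqc_eq : ∀ x ∈ Icc (0:ℝ) 1, qc x = q x := by
      intro x hx
      have hpx : proj x = x := by
        simp only [hprojdef]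
        rw [min_eq_right hx.2, max_eq_right hx.1]
      simp only [hqcdef, hpx]
    have hqc_le : ∀ t, qc t ≤ q x₀ := fun t => hupper _ (hprojmem t)
    have hqc_ge : ∀ t, c₀ ≤ qc t := fun t => hlower _ (hprojmem t)
    have hqc_nonneg : ∀ t, 0 ≤ qc t := fun t => le_trans hc0.le (hqc_ge t)
    -- the key phase estimate
    have key : ∀ (φ : ℝ → ℝ) (z : ℝ) (k : ℕ), 0 < z → 11 * q x₀ ≤ z ^ 2 →
        φ 0 = 0 → φ 1 = k * π →
        (∀ x ∈ Icc (0:ℝ) 1, HasDerivAt φ (z - q x / z * Real.sin (φ x) ^ 2) x) →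
        |k * π - ∫ t in (0:ℝ)..1, Real.sqrt (z ^ 2 - qc t)| ≤ 11 * c₀ / (300 * z ^ 2) := by
      intro φ z k hz hz2 hφ0 hφ1 hODE
      have hqltz : ∀ x ∈ Icc (0:ℝ) 1, q x < z ^ 2 := by
        intro x hx
        have := hupper x hx
        nlinarith
      set θ : ℝ → ℝ := fun y => φ y - Real.arctan ((1 - Real.sqrt (z ^ 2 - q y) / z) *
        (Real.sin (φ y) * Real.cos (φ y)) /
        (Real.cos (φ y) ^ 2 + Real.sqrt (z ^ 2 - q y) / z * Real.sin (φ y) ^ 2)) with hθdef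
      set Φ : ℝ → ℝ := fun y => ∫ t in (0:ℝ)..y, Real.sqrt (z ^ 2 - qc t) with hΦdef
      set g : ℝ → ℝ := fun y => θ y - Φ y with hgdef
      set g' : ℝ → ℝ := fun x => - (q' x * (z * Real.sin (φ x) * Real.cos (φ x) /
        (2 * Real.sqrt (z ^ 2 - q x) * (z ^ 2 * Real.cos (φ x) ^ 2 + (z ^ 2 - q x) * Real.sin (φ x) ^ 2)))) with hg'def
      have hsqrtcont : Continuous fun t => Real.sqrt (z ^ 2 - qc t) :=
        Real.continuous_sqrt.comp (continuous_const.sub hqccont)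
      have hgderiv : ∀ x ∈ Icc (0:ℝ) 1, HasDerivWithinAt g (g' x) (Icc (0:ℝ) 1) x := by
        intro x hx
        have hθd := theta_deriv_aux q q' φ z x hz (hqdiff x hx) (hODE x hx) (hqltz x hx)
        have hΦd : HasDerivAt Φ (Real.sqrt (z ^ 2 - qc x)) x :=
          intervalIntegral.integral_hasDerivAt_right (hsqrtcont.intervalIntegrable _ _)
            (hsqrtcont.stronglyMeasurable.stronglyMeasurableAtFilter) hsqrtcont.continuousAt
        have hgd := hθd.sub hΦd
        rw [hqc_eq x hx] at hgd
        have heqv : Real.sqrt (z ^ 2 - q x) - q' x * (z * Real.sin (φ x) * Real.cos (φ x) /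
            (2 * Real.sqrt (z ^ 2 - q x) * (z ^ 2 * Real.cos (φ x) ^ 2 + (z ^ 2 - q x) * Real.sin (φ x) ^ 2)))
            - Real.sqrt (z ^ 2 - q x) = g' x := by
          simp only [hg'def]; ring
        rw [heqv] at hgd
        exact hgd.hasDerivWithinAt
      have hbound : ∀ x ∈ Icc (0:ℝ) 1, ‖g' x‖ ≤ 11 * c₀ / (300 * z ^ 2) := by
        intro x hx
        set s := Real.sin (φ x) with hs
        set c := Real.cos (φ x) with hc
        have hqx : q x < z ^ 2 := hqltz x hx
        have hrpos : 0 < Real.sqrt (z ^ 2 - q x) := Real.sqrt_pos.2 (by nlinarith)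
        set r := Real.sqrt (z ^ 2 - q x) with hr
        have hr2 : r ^ 2 = z ^ 2 - q x := Real.sq_sqrt (by nlinarith)
        have hsc : s ^ 2 + c ^ 2 = 1 := Real.sin_sq_add_cos_sq (φ x)
        have hWpos : 0 < z ^ 2 * c ^ 2 + (z ^ 2 - q x) * s ^ 2 := by
          rw [← hr2]
          rcases eq_or_ne s 0 with h | h
          · have hc2 : c ^ 2 = 1 := by rw [h] at hsc; simpa using hsc
            rw [h, hc2]; nlinarith
          · have hs2 : 0 < s ^ 2 := by positivity
            nlinarith [sq_nonneg (z * c), pow_pos hrpos 2]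
        have hfrac : |z * s * c / (2 * r * (z ^ 2 * c ^ 2 + (z ^ 2 - q x) * s ^ 2))|
            ≤ 1 / (4 * (z ^ 2 - q x)) := by
          rw [abs_div]
          rw [div_le_div_iff₀ (by positivity) (by nlinarith)]
          have habs : |2 * r * (z ^ 2 * c ^ 2 + (z ^ 2 - q x) * s ^ 2)|
              = 2 * r * (z ^ 2 * c ^ 2 + (z ^ 2 - q x) * s ^ 2) := abs_of_pos (by positivity)
          rw [habs]
          have h3 : |z * s * c| = z * |s * c| := by
            rw [show z * s * c = z * (s * c) by ring, abs_mul, abs_of_pos hz]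
          rw [h3]
          have h2 : 2 * z * r * |s * c| ≤ z ^ 2 * c ^ 2 + r ^ 2 * s ^ 2 := by
            have e1 : |s * c| = |s| * |c| := abs_mul s c
            have e2 : z ^ 2 * c ^ 2 = (z * |c|) ^ 2 := by rw [mul_pow, sq_abs]
            have e3 : r ^ 2 * s ^ 2 = (r * |s|) ^ 2 := by rw [mul_pow, sq_abs]
            rw [e1, e2, e3]
            nlinarith [sq_nonneg (z * |c| - r * |s|)]
          rw [← hr2]
          nlinarith [mul_le_mul_of_nonneg_left h2 hrpos.le, abs_nonneg (s * c), hrpos]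
        have hq'x := hq'bound x hx
        have h4 : (1:ℝ) / (4 * (z ^ 2 - q x)) ≤ 11 / (40 * z ^ 2) := by
          rw [div_le_div_iff₀ (by nlinarith) (by positivity)]
          have := hupper x hx
          nlinarith
        have h5 : ‖g' x‖ = |q' x| * |z * s * c / (2 * r * (z ^ 2 * c ^ 2 + (z ^ 2 - q x) * s ^ 2))| := by
          simp only [hg'def, Real.norm_eq_abs, abs_neg, abs_mul]
          rfl
        rw [h5]
        have h6 : |q' x| * |z * s * c / (2 * r * (z ^ 2 * c ^ 2 + (z ^ 2 - q x) * s ^ 2))|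
            ≤ (2/15 * c₀) * (11 / (40 * z ^ 2)) :=
          mul_le_mul hq'x (le_trans hfrac h4) (abs_nonneg _) (by positivity)
        calc |q' x| * |z * s * c / (2 * r * (z ^ 2 * c ^ 2 + (z ^ 2 - q x) * s ^ 2))|
            ≤ (2/15 * c₀) * (11 / (40 * z ^ 2)) := h6
          _ = 11 * c₀ / (300 * z ^ 2) := by ring
      have hmvt := Convex.norm_image_sub_le_of_norm_hasDerivWithin_le
        hgderiv hbound (convex_Icc 0 1) h0mem h1mem
      have hθ0 : θ 0 = 0 := by
        simp only [hθdef, hφ0, Real.sin_zero]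
        norm_num
      have hθ1 : θ 1 = k * π := by
        simp only [hθdef, hφ1, Real.sin_nat_mul_pi]
        norm_num
      have hΦ0 : Φ 0 = 0 := intervalIntegral.integral_same
      have hg1 : g 1 - g 0 = k * π - ∫ t in (0:ℝ)..1, Real.sqrt (z ^ 2 - qc t) := by
        simp only [hgdef]
        rw [hθ1, hθ0, hΦ0]
        simp only [hΦdef]
        ring
      rw [hg1] at hmvt
      simpa using hmvt
    -- apply the key estimates
    have hzn2' : 11 * q x₀ ≤ zn ^ 2 := le_trans hlam hzn2
    have hm' := key φm zm m hzm hlam hφm0 hφm1 hφmODE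
    have hn' := key φn zn n hzn hzn2' hφn0 hφn1 hφnODE
    set Gm := ∫ t in (0:ℝ)..1, Real.sqrt (zm ^ 2 - qc t) with hGmdef
    set Gn := ∫ t in (0:ℝ)..1, Real.sqrt (zn ^ 2 - qc t) with hGndef
    set Bm := 11 * c₀ / (300 * zm ^ 2) with hBmdef
    set Bn := 11 * c₀ / (300 * zn ^ 2) with hBndef
    have hmR : (0:ℝ) < m := by exact_mod_cast hm
    have hm1R : (1:ℝ) ≤ m := by exact_mod_cast hm
    have hnR : (0:ℝ) < n := by
      have : 0 < n := lt_of_le_of_lt (Nat.zero_le m) hmn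
      exact_mod_cast this
    have hmnR : (m:ℝ) + 1 ≤ n := by exact_mod_cast hmn
    have hsq : zn ^ 2 * (m:ℝ) ^ 2 = zm ^ 2 * (n:ℝ) ^ 2 := by
      have h8 := heq
      field_simp at h8
      linear_combination h8
    have hratio : zn * m = zm * n := by
      have hfac : (zn * m - zm * n) * (zn * m + zm * n) = 0 := by linear_combination hsq
      rcases mul_eq_zero.1 hfac with h | h
      · linarith
      · nlinarith [mul_pos hzn hmR, mul_pos hzm hnR]
    -- pointwise comparison
    have hpoint : ∀ t ∈ Icc (0:ℝ) 1,
        (n:ℝ) * Real.sqrt (zm ^ 2 - qc t) - m * Real.sqrt (zn ^ 2 - qc t)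
          ≤ -(((n:ℝ) ^ 2 - m ^ 2) * c₀ / (2 * n * zm)) := by
      intro t _
      have hQz : qc t < zm ^ 2 := by linarith [hqc_le t, hlam, hMpos]
      have hQzn : qc t < zn ^ 2 := by linarith [hqc_le t, hlam, hMpos, hzn2]
      have hmnRR : (m:ℝ) < n := by exact_mod_cast hmn
      exact sqrt_point_compare zm zn (qc t) c₀ (m:ℝ) (n:ℝ) hzm hzn hmR hnR hmnRR
        (hqc_ge t) hc0 (hqc_nonneg t) hQz hQzn hratio
    -- integrate the pointwise comparison
    have hcm : Continuous fun t => Real.sqrt (zm ^ 2 - qc t) :=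
      Real.continuous_sqrt.comp (continuous_const.sub hqccont)
    have hcn : Continuous fun t => Real.sqrt (zn ^ 2 - qc t) :=
      Real.continuous_sqrt.comp (continuous_const.sub hqccont)
    have hIle : (n:ℝ) * Gm - m * Gn ≤ -(((n:ℝ) ^ 2 - m ^ 2) * c₀ / (2 * n * zm)) := by
      have hint := intervalIntegral.integral_mono_on (a := (0:ℝ)) (b := 1)
        (μ := MeasureTheory.volume) zero_le_one
        (((continuous_const.mul hcm).sub (continuous_const.mul hcn)).intervalIntegrable _ _)
        (intervalIntegrable_const) hpoint
      rw [intervalIntegral.integral_const] at hint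
      simp only [Pi.sub_apply, Pi.mul_apply] at hint
      rw [intervalIntegral.integral_sub (f := fun t => (n:ℝ) * Real.sqrt (zm ^ 2 - qc t))
        (g := fun t => (m:ℝ) * Real.sqrt (zn ^ 2 - qc t)) ((continuous_const.mul hcm).intervalIntegrable _ _)
        ((continuous_const.mul hcn).intervalIntegrable _ _)] at hint
      rw [intervalIntegral.integral_const_mul, intervalIntegral.integral_const_mul] at hint
      simpa using hint
    -- lower bound from the key estimates
    have habs_m := abs_le.1 hm'
    have habs_n := abs_le.1 hn'
    have hA1 : (n:ℝ) * ((m:ℝ) * π - Bm) ≤ n * Gm :=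
      mul_le_mul_of_nonneg_left (by linarith [habs_m.2]) hnR.le
    have hA2 : (m:ℝ) * Gn ≤ m * ((n:ℝ) * π + Bn) :=
      mul_le_mul_of_nonneg_left (by linarith [habs_n.1]) hmR.le
    have hcomm : (n:ℝ) * ((m:ℝ) * π) = (m:ℝ) * ((n:ℝ) * π) := by ring
    have hlow2 : -((n:ℝ) * Bm) - m * Bn ≤ (n:ℝ) * Gm - m * Gn := by linarith [hA1, hA2, hcomm.le, hcomm.ge]
    have hΔ : ((n:ℝ) ^ 2 - m ^ 2) * c₀ / (2 * n * zm) ≤ n * Bm + m * Bn := by linarith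
    have hBnm : Bn ≤ Bm := by
      rw [hBmdef, hBndef]
      apply div_le_div_of_nonneg_left (by positivity) (by positivity)
      linarith [hzn2]
    have hBmpos : 0 < Bm := by rw [hBmdef]; positivity
    have hBnpos : 0 < Bn := by rw [hBndef]; positivity
    have hΔ2 : ((n:ℝ) ^ 2 - m ^ 2) * c₀ / (2 * n * zm) ≤ 22 * n * c₀ / (300 * zm ^ 2) := by
      have hmBn : (m:ℝ) * Bn ≤ n * Bm :=
        mul_le_mul (by linarith) hBnm hBnpos.le hnR.le
      have h2nBm : (n:ℝ) * Bm + m * Bn ≤ 2 * n * Bm := by linarith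
      have hrw : 2 * (n:ℝ) * Bm = 22 * n * c₀ / (300 * zm ^ 2) := by
        rw [hBmdef]; ring
      linarith [hΔ, h2nBm, hrw.le, hrw.ge]
    have hcleared : ((n:ℝ) ^ 2 - m ^ 2) * c₀ * (300 * zm ^ 2) ≤ 22 * n * c₀ * (2 * n * zm) := by
      rw [div_le_div_iff₀ (by positivity) (by positivity)] at hΔ2
      linarith
    have hn2m2 : (0:ℝ) < (n:ℝ) ^ 2 - m ^ 2 := by nlinarith [hmnR, hm1R]
    have hfinal : 300 * ((n:ℝ) ^ 2 - m ^ 2) * zm ≤ 44 * n ^ 2 := by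
      have hpos : 0 < c₀ * zm := mul_pos hc0 hzm
      have hh : (300 * ((n:ℝ) ^ 2 - m ^ 2) * zm) * (c₀ * zm) ≤ (44 * (n:ℝ) ^ 2) * (c₀ * zm) := by
        have hrr : (300 * ((n:ℝ) ^ 2 - m ^ 2) * zm) * (c₀ * zm)
            = ((n:ℝ) ^ 2 - m ^ 2) * c₀ * (300 * zm ^ 2) := by ring
        have hrr2 : (44 * (n:ℝ) ^ 2) * (c₀ * zm) = 22 * n * c₀ * (2 * n * zm) := by ring
        rw [hrr, hrr2]
        exact hcleared
      exact le_of_mul_le_mul_right hh hpos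
    -- lower bound on zm
    have hGm_le : Gm ≤ zm := by
      have hint := intervalIntegral.integral_mono_on (a := (0:ℝ)) (b := 1)
        (μ := MeasureTheory.volume) zero_le_one (hcm.intervalIntegrable _ _)
        (intervalIntegrable_const (c := zm))
        (fun t _ => by
          calc Real.sqrt (zm ^ 2 - qc t) ≤ Real.sqrt (zm ^ 2) :=
                Real.sqrt_le_sqrt (by nlinarith [hqc_nonneg t])
            _ = zm := Real.sqrt_sq hzm.le)
      rw [intervalIntegral.integral_const] at hint
      simpa using hint
    have h11c : 11 * c₀ ≤ zm ^ 2 := by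
      have h9 := hlower x₀ hx₀
      linarith
    have hBm300 : Bm ≤ 1 / 300 := by
      rw [hBmdef, div_le_div_iff₀ (by positivity) (by norm_num)]
      linarith
    have hπ : (3.141592 : ℝ) < π := Real.pi_gt_d6
    have hzm3 : 3 * (m:ℝ) ≤ zm := by
      have hmπ : (m:ℝ) * π ≤ Gm + Bm := by linarith [habs_m.1]
      have hmπ2 : (m:ℝ) * 3.141592 ≤ (m:ℝ) * π := by
        apply mul_le_mul_of_nonneg_left hπ.le hmR.le
      linarith [hGm_le, habs_m.2, hBm300, hm1R]
    exact ratio_final_numeric (m:ℝ) (n:ℝ) zm hm1R hmnR hzm3 hfinal
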